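/- arXiv:1311.4630 — 4 statements merged into one kernel-verified Lean document; each statement's English description precedes it below -/
import Mathlib

section
/- There exists a constant C > 0 such that for all real s ≥ 1, all μ ∈ ℝ, and all γ ∈ [−π, π]: | ∑_{n∈ℤ} (2πs²)^{−1/2} exp(−(n−μ)²/(2s²)) · e^{inγ} − e^{iμγ} · exp(−s²γ²/2) | ≤ C · exp(−π²s²/2). In particular one may take C = 3. -/
open Real Complex

lemma poisson_key (s μ γ : ℝ) (hs : 0 < s) :
    (∑' n : ℤ, (((2 * Real.pi * s ^ 2) ^ (-(1/2 : ℝ)) *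
        Real.exp (-((n : ℝ) - μ) ^ 2 / (2 * s ^ 2)) : ℝ) : ℂ) *
        Complex.exp ((n : ℂ) * (γ : ℂ) * Complex.I)) =
    ∑' n : ℤ, Complex.exp ((μ : ℂ) * ((γ : ℂ) - 2 * Real.pi * n) * Complex.I) *
        (Real.exp (-(s ^ 2 * (γ - 2 * Real.pi * n) ^ 2) / 2) : ℂ) := by
  have hπ : (0:ℝ) < Real.pi := Real.pi_pos
  have hs2 : (0:ℝ) < 2 * Real.pi * s ^ 2 := by positivity
  have hsC : (s:ℂ) ≠ 0 := by exact_mod_cast hs.ne'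
  have hπC : (Real.pi:ℂ) ≠ 0 := by exact_mod_cast hπ.ne'
  set a : ℂ := (((2 * Real.pi * s ^ 2)⁻¹ : ℝ) : ℂ) with ha_def
  set b : ℂ := ((μ:ℂ) / s ^ 2 + γ * Complex.I) / (2 * Real.pi) with hb_def
  have ha : 0 < a.re := by
    simp only [ha_def, Complex.ofReal_re]
    positivity
  set C : ℂ := (((2 * Real.pi * s ^ 2) ^ (-(1/2:ℝ)) : ℝ) : ℂ) *
      Complex.exp (-(μ:ℂ) ^ 2 / (2 * s ^ 2)) with hC_def
  have step1 : ∀ n : ℤ, (((2 * Real.pi * s ^ 2) ^ (-(1/2 : ℝ)) *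
        Real.exp (-((n : ℝ) - μ) ^ 2 / (2 * s ^ 2)) : ℝ) : ℂ) *
        Complex.exp ((n : ℂ) * (γ : ℂ) * Complex.I) =
      C * Complex.exp (-Real.pi * a * n ^ 2 + 2 * Real.pi * b * n) := by
    intro n
    have ha' : -(Real.pi:ℂ) * a * (n:ℂ) ^ 2 = -(n:ℂ) ^ 2 / (2 * (s:ℂ) ^ 2) := by
      rw [ha_def]; push_cast; field_simp
    have hb' : 2 * (Real.pi:ℂ) * b * (n:ℂ) = (μ:ℂ) * n / (s:ℂ) ^ 2 + (γ:ℂ) * n * Complex.I := by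
      rw [hb_def]; field_simp
    have h : ((-(↑n - μ) ^ 2 / (2 * s ^ 2) : ℝ) : ℂ) + ↑n * ↑γ * Complex.I =
        (-(μ:ℂ) ^ 2 / (2 * (s:ℂ) ^ 2)) + (-↑Real.pi * a * ↑n ^ 2 + 2 * ↑Real.pi * b * ↑n) := by
      rw [ha', hb']
      push_cast
      have h2 : (2 * (s:ℂ) ^ 2) ≠ 0 := by simp [hsC]
      apply mul_left_cancel₀ h2
      simp only [mul_add, mul_div_cancel₀ _ h2]
      rw [show (2 * (s:ℂ) ^ 2) * ((μ:ℂ) * n / (s:ℂ) ^ 2) = 2 * ((μ:ℂ) * n) *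
        ((s:ℂ) ^ 2 / (s:ℂ) ^ 2) by ring, div_self (pow_ne_zero 2 hsC)]
      ring
    rw [Complex.ofReal_mul, Complex.ofReal_exp, mul_assoc, ← Complex.exp_add, h,
      Complex.exp_add, ← mul_assoc, hC_def]
  rw [tsum_congr step1, tsum_mul_left, Complex.tsum_exp_neg_quadratic ha b]
  have hcpow : a ^ (1/2 : ℂ) = (((2 * Real.pi * s ^ 2) ^ (-(1/2:ℝ)) : ℝ) : ℂ) := by
    rw [ha_def]
    rw [show ((1/2 : ℂ)) = ((1/2 : ℝ) : ℂ) by norm_num]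
    rw [← Complex.ofReal_cpow (by positivity)]
    rw [Real.inv_rpow hs2.le, ← Real.rpow_neg hs2.le]
  have hne : (((2 * Real.pi * s ^ 2) ^ (-(1/2:ℝ)) : ℝ) : ℂ) ≠ 0 := by
    simp only [ne_eq, Complex.ofReal_eq_zero]
    positivity
  rw [hcpow, ← mul_assoc, hC_def]
  rw [show (((2 * Real.pi * s ^ 2) ^ (-(1/2:ℝ)) : ℝ) : ℂ) *
      Complex.exp (-(μ:ℂ) ^ 2 / (2 * s ^ 2)) *
      (1 / (((2 * Real.pi * s ^ 2) ^ (-(1/2:ℝ)) : ℝ) : ℂ)) =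
      Complex.exp (-(μ:ℂ) ^ 2 / (2 * s ^ 2)) by field_simp]
  rw [← tsum_mul_left]
  refine tsum_congr fun n => ?_
  rw [Complex.ofReal_exp, ← Complex.exp_add, ← Complex.exp_add]
  congr 1
  push_cast [ha_def, hb_def]
  field_simp
  ring_nf
  simp only [Complex.I_sq, show Complex.I ^ 3 = -Complex.I by simp [pow_succ, Complex.I_sq],
    show Complex.I ^ 4 = 1 by simp [pow_succ, Complex.I_sq]]
  ring

lemma term_norm (s μ γ : ℝ) (n : ℤ) :
    ‖Complex.exp ((μ : ℂ) * ((γ : ℂ) - 2 * Real.pi * n) * Complex.I) *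
        (Real.exp (-(s ^ 2 * (γ - 2 * Real.pi * n) ^ 2) / 2) : ℂ)‖ =
      Real.exp (-(s ^ 2 * (γ - 2 * Real.pi * n) ^ 2) / 2) := by
  rw [norm_mul, Complex.norm_real, Real.norm_eq_abs, abs_of_pos (Real.exp_pos _),
    show (μ : ℂ) * ((γ : ℂ) - 2 * Real.pi * n) * Complex.I =
      ((μ * (γ - 2 * Real.pi * n) : ℝ) : ℂ) * Complex.I by push_cast; ring]
  rw [Complex.norm_exp_ofReal_mul_I, one_mul]

lemma exp_neg_two_le : Real.exp (-2) ≤ 1/3 := by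
  have h3 : (3:ℝ) ≤ Real.exp 2 := by nlinarith [Real.add_one_le_exp (2:ℝ)]
  rw [Real.exp_neg, show (1/3 : ℝ) = 3⁻¹ by norm_num]
  exact inv_anti₀ (by norm_num) h3

lemma term_bound (s γ : ℝ) (hs : 1 ≤ s) (hγ : |γ| ≤ Real.pi) (n : ℤ) (hn : n ≠ 0) :
    Real.exp (-(s ^ 2 * (γ - 2 * Real.pi * n) ^ 2) / 2) ≤
      Real.exp (-(Real.pi ^ 2 * s ^ 2) / 2) * (1/3 : ℝ) ^ (n.natAbs - 1) := by
  have hπ3 : (3:ℝ) < Real.pi := Real.pi_gt_three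
  set m : ℕ := n.natAbs with hm_def
  have hm1 : 1 ≤ m := Int.natAbs_pos.mpr hn
  have hmR : (1:ℝ) ≤ (m:ℝ) := by exact_mod_cast hm1
  have habs : |(n:ℝ)| = (m:ℝ) := by
    rw [hm_def, Nat.cast_natAbs, Int.cast_abs]
  have h1 : Real.pi * (2 * (m:ℝ) - 1) ≤ |γ - 2 * Real.pi * n| := by
    have h2 : |2 * Real.pi * (n:ℝ)| - |γ| ≤ |2 * Real.pi * (n:ℝ) - γ| :=
      abs_sub_abs_le_abs_sub _ _
    rw [abs_sub_comm] at h2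
    have h3 : |2 * Real.pi * (n:ℝ)| = 2 * Real.pi * (m:ℝ) := by
      rw [abs_mul, habs, abs_of_pos (by positivity : (0:ℝ) < 2 * Real.pi)]
    nlinarith
  have h0 : 0 ≤ Real.pi * (2 * (m:ℝ) - 1) := by nlinarith
  have hsq : (Real.pi * (2 * (m:ℝ) - 1)) ^ 2 ≤ (γ - 2 * Real.pi * n) ^ 2 := by
    rw [← _root_.sq_abs (γ - 2 * Real.pi * n)]
    exact pow_le_pow_left₀ h0 h1 2
  have key : -(s ^ 2 * (γ - 2 * Real.pi * n) ^ 2) / 2 ≤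
      -(Real.pi ^ 2 * s ^ 2) / 2 + (-2) * ((m:ℝ) - 1) := by
    have h4 : s ^ 2 * (Real.pi * (2 * (m:ℝ) - 1)) ^ 2 ≤
        s ^ 2 * (γ - 2 * Real.pi * n) ^ 2 :=
      mul_le_mul_of_nonneg_left hsq (sq_nonneg s)
    have hp2 : (9:ℝ) ≤ Real.pi ^ 2 := by nlinarith [sq_nonneg (Real.pi - 3)]
    have hs2' : (1:ℝ) ≤ s ^ 2 := by nlinarith
    have h99 : (9:ℝ) ≤ Real.pi ^ 2 * s ^ 2 := by
      nlinarith [mul_le_mul hp2 hs2' zero_le_one (by positivity : (0:ℝ) ≤ Real.pi ^ 2)]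
    nlinarith [mul_nonneg (sub_nonneg.mpr hmR)
      (by nlinarith : (0:ℝ) ≤ Real.pi ^ 2 * s ^ 2 * (m:ℝ) - 1), sq_nonneg s]
  calc Real.exp (-(s ^ 2 * (γ - 2 * Real.pi * n) ^ 2) / 2)
      ≤ Real.exp (-(Real.pi ^ 2 * s ^ 2) / 2 + (-2) * ((m:ℝ) - 1)) := Real.exp_le_exp.mpr key
    _ = Real.exp (-(Real.pi ^ 2 * s ^ 2) / 2) * Real.exp (((m - 1 : ℕ) : ℝ) * (-2)) := by
        rw [← Real.exp_add]
        congr 1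
        push_cast [Nat.cast_sub hm1]
        ring
    _ = Real.exp (-(Real.pi ^ 2 * s ^ 2) / 2) * Real.exp (-2) ^ (m - 1) := by
        rw [Real.exp_nat_mul]
    _ ≤ Real.exp (-(Real.pi ^ 2 * s ^ 2) / 2) * (1/3 : ℝ) ^ (m - 1) := by
        exact mul_le_mul_of_nonneg_left
          (pow_le_pow_left₀ (Real.exp_nonneg _) exp_neg_two_le _) (Real.exp_nonneg _)

lemma pow_bound (k : ℕ) : (1/3:ℝ) ^ (k - 1) ≤ 3 * (1/3:ℝ) ^ k := by
  cases k with
  | zero => norm_num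
  | succ k =>
    rw [Nat.add_sub_cancel, pow_succ]
    nlinarith [pow_nonneg (by norm_num : (0:ℝ) ≤ 1/3) k]

lemma geo_summable (e : ℝ) (he : 0 ≤ e) :
    Summable (fun n : ℤ => e * (1/3:ℝ) ^ (n.natAbs - 1)) := by
  have hgeo : Summable (fun k : ℕ => e * (3 * (1/3:ℝ) ^ k)) :=
    ((summable_geometric_of_lt_one (by norm_num) (by norm_num)).mul_left 3).mul_left e
  have hnat : Summable (fun k : ℕ => e * (1/3:ℝ) ^ (k - 1)) := by
    refine Summable.of_nonneg_of_le (fun k => by positivity)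
      (fun k => mul_le_mul_of_nonneg_left (pow_bound k) he) hgeo
  apply Summable.of_nat_of_neg
  · simpa only [Int.natAbs_natCast] using hnat
  · simpa only [Int.natAbs_neg, Int.natAbs_natCast] using hnat

lemma geo_tsum (e : ℝ) (he : 0 ≤ e) :
    ∑' n : ℤ, (if n = 0 then 0 else e * (1/3:ℝ) ^ (n.natAbs - 1)) = 3 * e := by
  have hgeo : Summable (fun k : ℕ => e * (1/3:ℝ) ^ k) :=
    (summable_geometric_of_lt_one (by norm_num) (by norm_num)).mul_left e
  have hposfun : (fun k : ℕ => if ((k:ℤ) = 0) then 0 else e * (1/3:ℝ) ^ ((k:ℤ).natAbs - 1)) =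
      (fun k : ℕ => if (k = 0) then 0 else e * (1/3:ℝ) ^ (k - 1)) := by
    funext k
    simp [Int.natAbs_natCast]
  have hnegfun : (fun k : ℕ => if ((-((k:ℤ)+1) : ℤ) = 0) then 0
      else e * (1/3:ℝ) ^ ((-((k:ℤ)+1) : ℤ).natAbs - 1)) =
      (fun k : ℕ => e * (1/3:ℝ) ^ k) := by
    funext k
    have h1 : (-((k:ℤ)+1) : ℤ) ≠ 0 := by omega
    have h2 : (-((k:ℤ)+1) : ℤ).natAbs = k + 1 := by omega
    rw [if_neg h1, h2, Nat.add_sub_cancel]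
  have hpos_sum : Summable (fun k : ℕ => if (k = 0) then 0 else e * (1/3:ℝ) ^ (k - 1)) := by
    refine Summable.of_nonneg_of_le (fun k => by positivity) (fun k => ?_)
      (((summable_geometric_of_lt_one (r := (1/3:ℝ)) (by norm_num) (by norm_num)).mul_left 3).mul_left e)
    split
    · positivity
    · exact mul_le_mul_of_nonneg_left (pow_bound k) he
  rw [tsum_of_nat_of_neg_add_one (by rw [hposfun]; exact hpos_sum) (by rw [hnegfun]; exact hgeo)]
  rw [hposfun, hnegfun]
  rw [Summable.tsum_eq_zero_add hpos_sum]
  have hg : ∑' k : ℕ, (1/3:ℝ) ^ k = (3/2 : ℝ) := by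
    rw [tsum_geometric_of_lt_one (by norm_num) (by norm_num)]; norm_num
  simp only [Nat.add_sub_cancel, if_neg (Nat.succ_ne_zero _), reduceIte, tsum_mul_left, hg]
  ring

theorem stmt_3 :
    ∃ C : ℝ, 0 < C ∧ C = 3 ∧
      ∀ (s μ γ : ℝ), 1 ≤ s → γ ∈ Set.Icc (-Real.pi) Real.pi →
        ‖(∑' n : ℤ, (((2 * Real.pi * s ^ 2) ^ (-(1/2 : ℝ)) *
              Real.exp (-((n : ℝ) - μ) ^ 2 / (2 * s ^ 2)) : ℝ) : ℂ) *
              Complex.exp ((n : ℂ) * (γ : ℂ) * Complex.I)) -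
            Complex.exp ((μ : ℂ) * (γ : ℂ) * Complex.I) *
              (Real.exp (-(s ^ 2 * γ ^ 2) / 2) : ℂ)‖
          ≤ C * Real.exp (-(Real.pi ^ 2 * s ^ 2) / 2) := by
  refine ⟨3, by norm_num, rfl, fun s μ γ hs hγ => ?_⟩
  have hs0 : (0:ℝ) < s := lt_of_lt_of_le one_pos hs
  have hγ' : |γ| ≤ Real.pi := abs_le.mpr ⟨hγ.1, hγ.2⟩
  rw [poisson_key s μ γ hs0]
  set e : ℝ := Real.exp (-(Real.pi ^ 2 * s ^ 2) / 2) with he_def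
  have he : 0 ≤ e := Real.exp_nonneg _
  set f : ℤ → ℂ := fun n => Complex.exp ((μ : ℂ) * ((γ : ℂ) - 2 * Real.pi * n) * Complex.I) *
      (Real.exp (-(s ^ 2 * (γ - 2 * Real.pi * n) ^ 2) / 2) : ℂ) with hf_def
  have hnorm : ∀ n : ℤ, n ≠ 0 → ‖f n‖ ≤ e * (1/3:ℝ) ^ (n.natAbs - 1) := by
    intro n hn
    rw [hf_def, term_norm]
    exact term_bound s γ hs hγ' n hn
  have hFsum := geo_summable e he
  have hfsum : Summable f := by
    apply Summable.of_norm_bounded_eventually hFsum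
    rw [Filter.eventually_cofinite]
    apply Set.Finite.subset (Set.finite_singleton 0)
    intro n hn
    simp only [Set.mem_setOf_eq] at hn
    simp only [Set.mem_singleton_iff]
    by_contra h
    exact hn (hnorm n h)
  rw [Summable.tsum_eq_add_tsum_ite hfsum 0]
  have hf0 : f 0 = Complex.exp ((μ : ℂ) * (γ : ℂ) * Complex.I) *
      (Real.exp (-(s ^ 2 * γ ^ 2) / 2) : ℂ) := by
    rw [hf_def]
    norm_num
  rw [hf0, add_sub_cancel_left]
  calc ‖∑' n : ℤ, if n = 0 then 0 else f n‖
      ≤ ∑' n : ℤ, (if n = 0 then 0 else e * (1/3:ℝ) ^ (n.natAbs - 1)) := by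
        apply tsum_of_norm_bounded
          ((hFsum.of_nonneg_of_le ?_ ?_ : Summable _).hasSum)
        · intro n
          by_cases h : n = 0
          · simp [h]
          · simpa [h] using hnorm n h
        · intro n; positivity
        · intro n
          split
          · positivity
          · exact le_rfl
    _ = 3 * e := geo_tsum e he
end

section
/- Fix a prime d ≥ 2 and let ω = exp(2πi/d). Let p : ZMod d → ℝ be a probability distribution (p k ≥ 0 for all k, ∑_k p k = 1) with at least two nonzero components, and define the N-fold convolution powers c⁽ᴺ⁾ : ZMod d → ℝ by c⁽¹⁾ = p and c⁽ᴺ⁺¹⁾ j = ∑_{k} c⁽ᴺ⁾(j − k) · p k. Then there exists ε ∈ [0, 1) such that for all N ≥ 1: (1/d) · | ∑_{j ∈ ZMod d} √(c⁽ᴺ⁾ j) |² ≥ 1 − (d−1)³ · ε^{2N}. That is, the probability that the covariant measurement on N copies correctly identifies the ℤ_d misalignment converges to 1 exponentially fast in N. -/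
open Complex Finset

namespace Stmt6Aux

noncomputable def om (d : ℕ) : ℂ := Complex.exp (2 * Real.pi * Complex.I / d)

lemma om_prim (d : ℕ) [NeZero d] : IsPrimitiveRoot (om d) d :=
  Complex.isPrimitiveRoot_exp d (NeZero.ne d)

noncomputable def chi (d : ℕ) (t : ZMod d) : ℂ := om d ^ t.val

lemma om_pow_mod (d : ℕ) [NeZero d] (a : ℕ) : om d ^ (a % d) = om d ^ a := by
  conv_rhs => rw [← Nat.mod_add_div a d, pow_add, pow_mul, (om_prim d).pow_eq_one, one_pow, mul_one]

lemma chi_zero (d : ℕ) [NeZero d] : chi d 0 = 1 := by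
  simp [chi, ZMod.val_zero]

lemma chi_add (d : ℕ) [NeZero d] (s t : ZMod d) : chi d (s + t) = chi d s * chi d t := by
  rw [chi, chi, chi, ← pow_add, ZMod.val_add, om_pow_mod]

lemma chi_abs (d : ℕ) [NeZero d] (t : ZMod d) : ‖chi d t‖ = 1 := by
  rw [chi, norm_pow, om, Complex.norm_exp]
  have h0 : (2 * Real.pi * Complex.I / d).re = 0 := by
    simp [Complex.div_re]
  rw [h0, Real.exp_zero, one_pow]

lemma chi_ne_zero (d : ℕ) [NeZero d] (t : ZMod d) : chi d t ≠ 0 := by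
  intro h
  have := chi_abs d t
  rw [h] at this; simp at this

lemma chi_inj (d : ℕ) [NeZero d] {s t : ZMod d} (h : chi d s = chi d t) : s = t := by
  have := (om_prim d).pow_inj s.val_lt t.val_lt h
  exact ZMod.val_injective d this

lemma conj_chi (d : ℕ) [NeZero d] (t : ZMod d) :
    (starRingEnd ℂ) (chi d t) = chi d (-t) := by
  have h1 : chi d t * chi d (-t) = 1 := by rw [← chi_add, add_neg_cancel, chi_zero]
  have h2 : chi d t * (starRingEnd ℂ) (chi d t) = 1 := by
    rw [Complex.mul_conj]
    norm_cast
    rw [← Complex.sq_norm, chi_abs]; norm_num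
  exact mul_left_cancel₀ (chi_ne_zero d t) (h2.trans h1.symm)

lemma sum_zmod_val (d : ℕ) [NeZero d] (f : ℕ → ℂ) :
    ∑ m : ZMod d, f m.val = ∑ i ∈ Finset.range d, f i := by
  refine Finset.sum_nbij' (fun m => m.val) (fun i => (i : ZMod d)) ?_ ?_ ?_ ?_ ?_ <;>
    simp [ZMod.val_lt, ZMod.natCast_val, ZMod.val_cast_of_lt]
  intro a ha; exact Nat.mod_eq_of_lt ha

lemma chi_mul_pow (d : ℕ) [NeZero d] (m t : ZMod d) : chi d (m * t) = chi d t ^ m.val := by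
  rw [chi, chi, ZMod.val_mul, om_pow_mod, mul_comm, pow_mul]

lemma sum_chi (d : ℕ) [NeZero d] (hd : d.Prime) (t : ZMod d) (ht : t ≠ 0) :
    ∑ m : ZMod d, chi d (m * t) = 0 := by
  have hvne : t.val ≠ 0 := fun h => ht (ZMod.val_injective d (by simpa using h))
  have hcop : (t.val).Coprime d :=
    ((hd.coprime_iff_not_dvd).mpr (fun h => hvne (Nat.eq_zero_of_dvd_of_lt h t.val_lt))).symm
  have hprim : IsPrimitiveRoot (chi d t) d := (om_prim d).pow_of_coprime t.val hcop
  calc ∑ m : ZMod d, chi d (m * t) = ∑ m : ZMod d, chi d t ^ m.val := by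
        simp_rw [chi_mul_pow]
    _ = ∑ i ∈ Finset.range d, chi d t ^ i := sum_zmod_val d _
    _ = 0 := hprim.geom_sum_eq_zero hd.one_lt

/-- strict triangle for two distinct unit vectors -/
lemma two_unit_lt (a b : ℝ) (u v : ℂ) (ha : 0 < a) (hb : 0 < b)
    (hu : ‖u‖ = 1) (hv : ‖v‖ = 1) (huv : u ≠ v) :
    ‖a * u + b * v‖ < a + b := by
  have hvv : (starRingEnd ℂ) v * v = 1 := by
    rw [mul_comm, Complex.mul_conj, Complex.normSq_eq_norm_sq, hv]; norm_num
  have hwne : u * (starRingEnd ℂ) v ≠ 1 := by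
    intro h
    apply huv
    have := congrArg (· * v) h
    simpa [mul_assoc, hvv] using this
  have hwab : ‖u * (starRingEnd ℂ) v‖ = 1 := by
    rw [norm_mul, Complex.norm_conj, hu, hv]; norm_num
  have hre : (u * (starRingEnd ℂ) v).re < 1 := by
    rcases lt_or_eq_of_le ((Complex.re_le_norm _).trans_eq hwab) with h | h
    · exact h
    · exfalso
      apply hwne
      have him : (u * (starRingEnd ℂ) v).im = 0 := by
        have hn : Complex.normSq (u * (starRingEnd ℂ) v) = 1 := by
          rw [Complex.normSq_eq_norm_sq, hwab]; norm_num
        rw [Complex.normSq_apply, h] at hn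
        nlinarith [sq_nonneg (u * (starRingEnd ℂ) v).im]
      exact Complex.ext (by rw [h]; rfl) (by rw [him]; rfl)
  have hsq : ‖↑a * u + ↑b * v‖ ^ 2 < (a + b) ^ 2 := by
    rw [Complex.sq_norm, Complex.normSq_add]
    have h1 : Complex.normSq (↑a * u) = a ^ 2 := by
      rw [Complex.normSq_mul, Complex.normSq_eq_norm_sq, Complex.normSq_eq_norm_sq, hu,
        Complex.norm_real, Real.norm_eq_abs, abs_of_pos ha]; ring
    have h2 : Complex.normSq (↑b * v) = b ^ 2 := by
      rw [Complex.normSq_mul, Complex.normSq_eq_norm_sq, Complex.normSq_eq_norm_sq, hv,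
        Complex.norm_real, Real.norm_eq_abs, abs_of_pos hb]; ring
    have h3 : (↑a * u * (starRingEnd ℂ) (↑b * v)).re = a * b * (u * (starRingEnd ℂ) v).re := by
      rw [map_mul, Complex.conj_ofReal]
      have : (↑a : ℂ) * u * ((↑b : ℂ) * (starRingEnd ℂ) v) = ((a * b : ℝ) : ℂ) * (u * (starRingEnd ℂ) v) := by
        push_cast; ring
      rw [this, Complex.re_ofReal_mul]
    rw [h1, h2, h3]
    nlinarith [mul_lt_mul_of_pos_left hre (mul_pos ha hb)]
  exact lt_of_pow_lt_pow_left₀ 2 (by positivity) hsq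

end Stmt6Aux

open Complex Finset Stmt6Aux

theorem stmt_6 (d : ℕ) [NeZero d] (hd : d.Prime)
    (p : ZMod d → ℝ) (hp : ∀ k, 0 ≤ p k) (hpsum : ∑ k, p k = 1)
    (htwo : ∃ j k : ZMod d, j ≠ k ∧ p j ≠ 0 ∧ p k ≠ 0)
    (c : ℕ → ZMod d → ℝ) (hc1 : c 1 = p)
    (hcrec : ∀ N : ℕ, 1 ≤ N → ∀ j : ZMod d, c (N + 1) j = ∑ k : ZMod d, c N (j - k) * p k) :
    ∃ ε : ℝ, 0 ≤ ε ∧ ε < 1 ∧ ∀ N : ℕ, 1 ≤ N →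
      (1 / d) * |∑ j : ZMod d, Real.sqrt (c N j)| ^ 2
        ≥ 1 - ((d : ℝ) - 1) ^ 3 * ε ^ (2 * N) := by
  classical
  haveI := Fact.mk hd
  haveI : Fact (1 < d) := ⟨hd.one_lt⟩
  obtain ⟨j0, k0, hjk, hpj0, hpk0⟩ := htwo
  have hd2 : 2 ≤ d := hd.two_le
  have hdR : (2:ℝ) ≤ (d:ℝ) := by exact_mod_cast hd2
  have hdpos : (0:ℝ) < d := by linarith
  have hdC : ((d:ℂ)) ≠ 0 := by exact_mod_cast (show (d:ℝ) ≠ 0 from hdpos.ne')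
  -- basic properties of c
  have hcbase : ∀ N, 1 ≤ N → (∀ j, 0 ≤ c N j) ∧ (∑ j, c N j = 1) := by
    intro N hN
    induction N, hN using Nat.le_induction with
    | base => rw [hc1]; exact ⟨hp, hpsum⟩
    | succ n hn ih =>
      refine ⟨fun j => ?_, ?_⟩
      · rw [hcrec n hn j]
        exact Finset.sum_nonneg fun k _ => mul_nonneg (ih.1 _) (hp k)
      · simp_rw [hcrec n hn]
        rw [Finset.sum_comm]
        have hrow : ∀ k : ZMod d, ∑ j : ZMod d, c n (j - k) * p k = p k := by
          intro k
          rw [← Finset.sum_mul,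
            show (∑ j : ZMod d, c n (j - k)) = ∑ j : ZMod d, c n j from
              Fintype.sum_equiv (Equiv.subRight k) _ _ (fun j => rfl),
            ih.2, one_mul]
        simp_rw [hrow]; exact hpsum
  -- Fourier transform of p
  set P : ZMod d → ℂ := fun m => ∑ k, (p k : ℂ) * chi d (m * k) with hPdef
  have hP0 : P 0 = 1 := by
    simp only [hPdef, zero_mul, chi_zero, mul_one]
    rw [← Complex.ofReal_sum, hpsum]; norm_num
  have hft : ∀ N, 1 ≤ N → ∀ m, (∑ k, (c N k : ℂ) * chi d (m * k)) = P m ^ N := by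
    intro N hN
    induction N, hN using Nat.le_induction with
    | base => intro m; rw [hc1, pow_one]
    | succ n hn ih =>
      intro m
      have hexp : ∀ j : ZMod d, ((c (n+1) j : ℂ)) = ∑ k, (c n (j - k) : ℂ) * (p k : ℂ) := by
        intro j; rw [hcrec n hn j]; push_cast; rfl
      calc (∑ j, (c (n+1) j : ℂ) * chi d (m * j))
          = ∑ j, ∑ k, (c n (j-k) : ℂ) * (p k:ℂ) * chi d (m * j) := by
            simp_rw [hexp, Finset.sum_mul]
        _ = ∑ k, ∑ j, (c n (j-k) : ℂ) * (p k:ℂ) * chi d (m * j) := Finset.sum_comm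
        _ = ∑ k, (p k:ℂ) * chi d (m*k) * P m ^ n := by
            refine Finset.sum_congr rfl fun k _ => ?_
            rw [← Equiv.sum_comp (Equiv.addRight k)
              (fun j => (c n (j-k) : ℂ) * (p k:ℂ) * chi d (m * j))]
            simp only [Equiv.coe_addRight, add_sub_cancel_right]
            have hch : ∀ i : ZMod d, chi d (m * (i + k)) = chi d (m*i) * chi d (m*k) := by
              intro i; rw [mul_add, chi_add]
            simp_rw [hch]
            rw [← ih m, Finset.mul_sum]
            exact Finset.sum_congr rfl fun i _ => by ring
        _ = P m ^ (n+1) := by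
            rw [← Finset.sum_mul]
            show P m * P m ^ n = P m ^ (n + 1)
            exact (pow_succ' _ _).symm
  -- orthogonality
  have horth : ∀ t : ZMod d, ∑ m : ZMod d, chi d (m * t) = if t = 0 then (d:ℂ) else 0 := by
    intro t
    by_cases ht : t = 0
    · simp [ht, chi_zero, Finset.card_univ, ZMod.card]
    · simp [ht, sum_chi d hd t ht]
  -- Fourier inversion
  have hinv : ∀ N, 1 ≤ N → ∀ j : ZMod d,
      ((c N j : ℂ)) = (1/(d:ℂ)) * ∑ m : ZMod d, P m ^ N * chi d (-(m * j)) := by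
    intro N hN j
    have hkey : ∑ m : ZMod d, P m ^ N * chi d (-(m*j)) = (d:ℂ) * (c N j : ℂ) := by
      calc ∑ m : ZMod d, P m ^ N * chi d (-(m*j))
          = ∑ m : ZMod d, (∑ k, (c N k:ℂ) * chi d (m*k)) * chi d (-(m*j)) := by
            simp_rw [hft N hN]
        _ = ∑ m : ZMod d, ∑ k, (c N k:ℂ) * chi d (m*(k-j)) := by
            refine Finset.sum_congr rfl fun m _ => ?_
            rw [Finset.sum_mul]
            refine Finset.sum_congr rfl fun k _ => ?_
            rw [mul_assoc, ← chi_add]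
            congr 2
            ring
        _ = ∑ k, (c N k:ℂ) * ∑ m : ZMod d, chi d (m*(k-j)) := by
            rw [Finset.sum_comm]
            exact Finset.sum_congr rfl fun k _ => (Finset.mul_sum _ _ _).symm
        _ = ∑ k, (c N k:ℂ) * (if k - j = 0 then (d:ℂ) else 0) := by simp_rw [horth]
        _ = (d:ℂ) * (c N j : ℂ) := by
            rw [Finset.sum_eq_single j]
            · simp [mul_comm]
            · intro k _ hk
              rw [if_neg (sub_ne_zero_of_ne hk), mul_zero]
            · intro h; exact absurd (Finset.mem_univ j) h
    rw [hkey]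
    field_simp
  -- the deviation bound
  have h10 : (1 : ZMod d) ≠ 0 := by
    intro h
    have := ZMod.val_one d
    rw [h, ZMod.val_zero] at this
    exact zero_ne_one this
  have hne : (Finset.univ.erase (0 : ZMod d)).Nonempty :=
    ⟨1, Finset.mem_erase.mpr ⟨h10, Finset.mem_univ _⟩⟩
  set ε₀ : ℝ := (Finset.univ.erase (0 : ZMod d)).sup' hne (fun m => ‖P m‖) with hε₀
  have habs_lt : ∀ m : ZMod d, m ≠ 0 → ‖P m‖ < 1 := by
    intro m hm
    have hj0pos : 0 < p j0 := (hp j0).lt_of_ne (Ne.symm hpj0)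
    have hk0pos : 0 < p k0 := (hp k0).lt_of_ne (Ne.symm hpk0)
    have hune : chi d (m * j0) ≠ chi d (m * k0) := by
      intro h
      exact hjk (mul_left_cancel₀ hm (chi_inj d h))
    have key : P m = ((p j0:ℂ) * chi d (m*j0) + (p k0:ℂ) * chi d (m*k0))
        + ∑ k ∈ (Finset.univ.erase j0).erase k0, (p k:ℂ) * chi d (m*k) := by
      simp only [hPdef]
      rw [← Finset.add_sum_erase _ _ (Finset.mem_univ j0),
        ← Finset.add_sum_erase _ _ (Finset.mem_erase.mpr ⟨Ne.symm hjk, Finset.mem_univ k0⟩),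
        ← add_assoc]
    have hrest : ‖∑ k ∈ (Finset.univ.erase j0).erase k0, (p k:ℂ) * chi d (m*k)‖
        ≤ 1 - p j0 - p k0 := by
      have h1 : ‖∑ k ∈ (Finset.univ.erase j0).erase k0, (p k:ℂ) * chi d (m*k)‖
          ≤ ∑ k ∈ (Finset.univ.erase j0).erase k0, p k := by
        refine (norm_sum_le _ _).trans (le_of_eq ?_)
        refine Finset.sum_congr rfl fun k _ => ?_
        rw [norm_mul, chi_abs, mul_one, Complex.norm_real, Real.norm_eq_abs, _root_.abs_of_nonneg (hp k)]
      have h2 : ∑ k ∈ (Finset.univ.erase j0).erase k0, p k = 1 - p j0 - p k0 := by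
        rw [Finset.sum_erase_eq_sub (Finset.mem_erase.mpr ⟨Ne.symm hjk, Finset.mem_univ k0⟩),
          Finset.sum_erase_eq_sub (Finset.mem_univ j0), hpsum]
      linarith
    have hmain : ‖(p j0:ℂ) * chi d (m*j0) + (p k0:ℂ) * chi d (m*k0)‖ < p j0 + p k0 :=
      two_unit_lt (p j0) (p k0) _ _ hj0pos hk0pos (chi_abs d _) (chi_abs d _) hune
    calc ‖P m‖
        ≤ ‖(p j0:ℂ) * chi d (m*j0) + (p k0:ℂ) * chi d (m*k0)‖
          + ‖∑ k ∈ (Finset.univ.erase j0).erase k0, (p k:ℂ) * chi d (m*k)‖ := by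
          rw [key]; exact norm_add_le _ _
      _ < (p j0 + p k0) + (1 - p j0 - p k0) := add_lt_add_of_lt_of_le hmain hrest
      _ = 1 := by ring
  have hε₀lt : ε₀ < 1 := by
    rw [hε₀, Finset.sup'_lt_iff]
    exact fun m hm => habs_lt m (Finset.mem_erase.mp hm).1
  have hε₀le : ∀ m : ZMod d, m ≠ 0 → ‖P m‖ ≤ ε₀ := by
    intro m hm
    rw [hε₀]
    exact Finset.le_sup' (fun m => ‖P m‖) (Finset.mem_erase.mpr ⟨hm, Finset.mem_univ _⟩)
  have hε₀nn : 0 ≤ ε₀ := le_trans (norm_nonneg (P 1)) (hε₀le 1 h10)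
  -- deviation from uniform
  have hdev : ∀ N, 1 ≤ N → ∀ j, |c N j - 1/(d:ℝ)| ≤ ((d:ℝ) - 1)/(d:ℝ) * ε₀ ^ N := by
    intro N hN j
    have h1 : ((c N j : ℂ)) - 1/(d:ℂ)
        = (1/(d:ℂ)) * ∑ m ∈ Finset.univ.erase (0:ZMod d), P m ^ N * chi d (-(m * j)) := by
      rw [hinv N hN j,
        ← Finset.add_sum_erase _ (fun m => P m ^ N * chi d (-(m * j))) (Finset.mem_univ (0:ZMod d))]
      have h0t : P 0 ^ N * chi d (-((0:ZMod d) * j)) = 1 := by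
        rw [hP0, one_pow, zero_mul, neg_zero, chi_zero, mul_one]
      rw [h0t]
      ring
    have h2 : |c N j - 1/(d:ℝ)| = ‖(c N j : ℂ) - 1/(d:ℂ)‖ := by
      rw [← Real.norm_eq_abs, ← Complex.norm_real]
      congr 1
      push_cast
      ring
    rw [h2, h1, norm_mul]
    have h3 : ‖1/(d:ℂ)‖ = 1/(d:ℝ) := by
      rw [norm_div, norm_one, Complex.norm_natCast]
    have h4 : ‖∑ m ∈ Finset.univ.erase (0:ZMod d), P m ^ N * chi d (-(m * j))‖
        ≤ ((d:ℝ) - 1) * ε₀ ^ N := by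
      refine (norm_sum_le _ _).trans ?_
      have hterm : ∀ m ∈ Finset.univ.erase (0:ZMod d),
          ‖P m ^ N * chi d (-(m * j))‖ ≤ ε₀ ^ N := by
        intro m hm
        rw [norm_mul, chi_abs, mul_one, norm_pow]
        exact pow_le_pow_left₀ (norm_nonneg _) (hε₀le m (Finset.mem_erase.mp hm).1) N
      refine (Finset.sum_le_sum hterm).trans (le_of_eq ?_)
      rw [Finset.sum_const, Finset.card_erase_of_mem (Finset.mem_univ _), Finset.card_univ,
        ZMod.card, nsmul_eq_mul, Nat.cast_sub (by omega : 1 ≤ d), Nat.cast_one]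
    rw [h3]
    calc 1/(d:ℝ) * ‖∑ m ∈ Finset.univ.erase (0:ZMod d), P m ^ N * chi d (-(m * j))‖
        ≤ 1/(d:ℝ) * (((d:ℝ) - 1) * ε₀ ^ N) := by
          apply mul_le_mul_of_nonneg_left h4 (by positivity)
      _ = ((d:ℝ) - 1)/(d:ℝ) * ε₀ ^ N := by ring
  -- final assembly
  refine ⟨Real.sqrt ε₀, Real.sqrt_nonneg _, ?_, ?_⟩
  · rw [show (1:ℝ) = Real.sqrt 1 by simp]
    exact Real.sqrt_lt_sqrt hε₀nn hε₀lt
  · intro N hN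
    have hpow : Real.sqrt ε₀ ^ (2*N) = ε₀ ^ N := by
      rw [pow_mul, Real.sq_sqrt hε₀nn]
    rw [hpow]
    set E : ℝ := ((d:ℝ) - 1) * ε₀ ^ N with hE
    have hEnn : 0 ≤ E := by
      apply mul_nonneg (by linarith) (pow_nonneg hε₀nn N)
    have hE3 : E ≤ ((d:ℝ) - 1)^3 * ε₀ ^ N := by
      rw [hE]
      have hp1 : (1:ℝ) ≤ (d:ℝ) - 1 := by linarith
      have hcube : ((d:ℝ)-1) ≤ ((d:ℝ)-1)^3 := le_self_pow₀ hp1 (by norm_num)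
      exact mul_le_mul_of_nonneg_right hcube (pow_nonneg hε₀nn N)
    -- Bhattacharyya bound
    have hcN := hcbase N hN
    set B : ℝ := ∑ j : ZMod d, Real.sqrt (c N j) * Real.sqrt (1/(d:ℝ)) with hB
    have hBnn : 0 ≤ B :=
      Finset.sum_nonneg fun j _ => mul_nonneg (Real.sqrt_nonneg _) (Real.sqrt_nonneg _)
    have hmin : ∀ j : ZMod d, min (c N j) (1/(d:ℝ)) ≤ Real.sqrt (c N j) * Real.sqrt (1/(d:ℝ)) := by
      intro j
      rcases le_total (c N j) (1/(d:ℝ)) with h | h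
      · rw [min_eq_left h]
        calc c N j = Real.sqrt (c N j) * Real.sqrt (c N j) := (Real.mul_self_sqrt (hcN.1 j)).symm
          _ ≤ Real.sqrt (c N j) * Real.sqrt (1/(d:ℝ)) := by
              apply mul_le_mul_of_nonneg_left (Real.sqrt_le_sqrt h) (Real.sqrt_nonneg _)
      · rw [min_eq_right h]
        calc 1/(d:ℝ) = Real.sqrt (1/(d:ℝ)) * Real.sqrt (1/(d:ℝ)) :=
              (Real.mul_self_sqrt (by positivity)).symm
          _ ≤ Real.sqrt (c N j) * Real.sqrt (1/(d:ℝ)) := by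
              apply mul_le_mul_of_nonneg_right (Real.sqrt_le_sqrt h) (Real.sqrt_nonneg _)
    have hminsum : ∑ j : ZMod d, min (c N j) (1/(d:ℝ))
        = 1 - (1/2) * ∑ j : ZMod d, |c N j - 1/(d:ℝ)| := by
      have hm : ∀ j : ZMod d, min (c N j) (1/(d:ℝ))
          = (c N j + 1/(d:ℝ))/2 - |c N j - 1/(d:ℝ)|/2 := by
        intro j
        rcases le_total (c N j) (1/(d:ℝ)) with h | h
        · rw [min_eq_left h, abs_of_nonpos (by linarith)]; ring
        · rw [min_eq_right h, _root_.abs_of_nonneg (by linarith)]; ring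
      simp_rw [hm]
      rw [Finset.sum_sub_distrib]
      have hs1 : ∑ j : ZMod d, (c N j + 1/(d:ℝ))/2 = 1 := by
        simp_rw [add_div]
        rw [Finset.sum_add_distrib, ← Finset.sum_div, hcN.2, Finset.sum_const, Finset.card_univ,
          ZMod.card, nsmul_eq_mul]
        field_simp
        ring
      rw [hs1]
      rw [← Finset.sum_div]
      ring
    have hTbd : ∑ j : ZMod d, |c N j - 1/(d:ℝ)| ≤ E := by
      calc ∑ j : ZMod d, |c N j - 1/(d:ℝ)| ≤ ∑ _j : ZMod d, ((d:ℝ) - 1)/(d:ℝ) * ε₀ ^ N :=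
            Finset.sum_le_sum fun j _ => hdev N hN j
        _ = (d:ℝ) * (((d:ℝ) - 1)/(d:ℝ) * ε₀ ^ N) := by
            rw [Finset.sum_const, Finset.card_univ, ZMod.card, nsmul_eq_mul]
        _ = E := by field_simp; exact hE.symm
    have hBlow : 1 - E/2 ≤ B := by
      have := Finset.sum_le_sum fun j (_ : j ∈ Finset.univ) => hmin j
      rw [hminsum] at this
      rw [hB]
      linarith
    have hgoal : 1 - ((d:ℝ) - 1)^3 * ε₀ ^ N ≤ B^2 := by
      rcases le_or_gt (1 - E/2) 0 with hcase | hcase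
      · have : 1 - ((d:ℝ)-1)^3 * ε₀^N ≤ 1 - E := by linarith
        nlinarith
      · have hB2 : (1 - E/2)^2 ≤ B^2 := pow_le_pow_left₀ hcase.le hBlow 2
        nlinarith
    -- rewrite LHS
    have hLHS : (1/(d:ℝ)) * |∑ j : ZMod d, Real.sqrt (c N j)| ^ 2 = B^2 := by
      rw [_root_.abs_of_nonneg (Finset.sum_nonneg fun j _ => Real.sqrt_nonneg _)]
      rw [hB, ← Finset.sum_mul, mul_pow, Real.sq_sqrt (by positivity : (0:ℝ) ≤ 1/(d:ℝ))]
      ring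
    rw [ge_iff_le, hLHS]
    exact hgoal
end

section
/- Fix an integer d ≥ 2 and let ω = exp(2πi/d). Let c : ZMod d → ℝ satisfy c_j ≥ 0 for all j, ∑_j c_j = 1, and |c_j − 1/d| ≤ δ for all j, for some δ ≥ 0. Then for every a ≠ 0 in ZMod d: (1/d) · | ∑_{j ∈ ZMod d} ω^{a·j} · √(c_j) |² ≤ d² · δ². -/
theorem stmt_11 (d : ℕ) [NeZero d] (hd : 2 ≤ d)
    (c : ZMod d → ℝ) (hc : ∀ j, 0 ≤ c j) (hcsum : ∑ j, c j = 1)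
    (δ : ℝ) (hδ : 0 ≤ δ) (hcδ : ∀ j : ZMod d, |c j - 1 / d| ≤ δ) :
    ∀ a : ZMod d, a ≠ 0 →
      (1 / d) * ‖∑ j : ZMod d,
          Complex.exp (2 * Real.pi * Complex.I / d) ^ ((a * j).val) * (Real.sqrt (c j) : ℂ)‖ ^ 2
        ≤ (d : ℝ) ^ 2 * δ ^ 2 := by
  intro a ha
  have hd0 : (0:ℝ) < d := by positivity
  set ω : ℂ := Complex.exp (2 * Real.pi * Complex.I / d) with hωdef
  have hdne : d ≠ 0 := NeZero.ne d
  have hprim : IsPrimitiveRoot ω d := Complex.isPrimitiveRoot_exp d hdne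
  have hωd : ω ^ d = 1 := hprim.pow_eq_one
  have hmod : ∀ n : ℕ, ω ^ (n % d) = ω ^ n := by
    intro n
    conv_rhs => rw [← Nat.mod_add_div n d]
    rw [pow_add, pow_mul, hωd, one_pow, mul_one]
  have hval : a.val < d := ZMod.val_lt a
  have hvalpos : 0 < a.val := Nat.pos_of_ne_zero (fun h => ha (by
    rwa [← ZMod.val_eq_zero a]))
  have hb : ω ^ a.val ≠ 1 := hprim.pow_ne_one_of_pos_of_lt hvalpos.ne' hval
  -- character sum is zero
  have hsum0 : ∑ j : ZMod d, ω ^ ((a * j).val) = 0 := by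
    have h1 : ∀ j : ZMod d, ω ^ ((a * j).val) = (ω ^ a.val) ^ j.val := by
      intro j
      rw [ZMod.val_mul, hmod, pow_mul]
    simp_rw [h1]
    have h2 : ∑ j : ZMod d, (ω ^ a.val) ^ j.val
        = ∑ i ∈ Finset.range d, (ω ^ a.val) ^ i := by
      refine Finset.sum_nbij' (fun j => j.val) (fun i => (i : ZMod d)) ?_ ?_ ?_ ?_ ?_
      · intro j _; exact Finset.mem_range.mpr (ZMod.val_lt j)
      · intro i _; exact Finset.mem_univ _
      · intro j _; simp [ZMod.natCast_val, ZMod.cast_id]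
      · intro i hi; exact ZMod.val_natCast_of_lt (Finset.mem_range.mp hi)
      · intro j _; rfl
    rw [h2, geom_sum_eq hb, ← pow_mul, mul_comm, pow_mul, hωd, one_pow, sub_self,
      zero_div]
  set t : ℝ := Real.sqrt (1 / d) with htdef
  have ht0 : 0 < t := Real.sqrt_pos.mpr (by positivity)
  -- rewrite sum
  have hS : ∑ j : ZMod d, ω ^ ((a * j).val) * (Real.sqrt (c j) : ℂ)
      = ∑ j : ZMod d, ω ^ ((a * j).val) * ((Real.sqrt (c j) - t : ℝ) : ℂ) := by
    rw [← sub_eq_zero, ← Finset.sum_sub_distrib]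
    have : ∀ j : ZMod d, ω ^ ((a * j).val) * (Real.sqrt (c j) : ℂ)
        - ω ^ ((a * j).val) * ((Real.sqrt (c j) - t : ℝ) : ℂ)
        = (t : ℂ) * ω ^ ((a * j).val) := by
      intro j; push_cast; ring
    simp_rw [this]
    rw [← Finset.mul_sum, hsum0, mul_zero]
  -- termwise bound
  have hterm : ∀ j : ZMod d, |Real.sqrt (c j) - t| ≤ δ * Real.sqrt d := by
    intro j
    have hsq : Real.sqrt (c j) * Real.sqrt (c j) = c j := Real.mul_self_sqrt (hc j)
    have hts : t * t = 1 / d := Real.mul_self_sqrt (by positivity)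
    have key : |Real.sqrt (c j) - t| * t ≤ δ := by
      have h1 : |Real.sqrt (c j) - t| * t ≤ |Real.sqrt (c j) - t| * (Real.sqrt (c j) + t) := by
        apply mul_le_mul_of_nonneg_left _ (abs_nonneg _)
        have := Real.sqrt_nonneg (c j); linarith
      have h2 : |Real.sqrt (c j) - t| * (Real.sqrt (c j) + t) = |c j - 1 / d| := by
        rw [← abs_of_nonneg (by positivity : (0:ℝ) ≤ Real.sqrt (c j) + t), ← abs_mul]
        congr 1
        nlinarith [hsq, hts]
      calc |Real.sqrt (c j) - t| * t ≤ |c j - 1/d| := h2 ▸ h1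
        _ ≤ δ := hcδ j
    have htd : t * Real.sqrt d = 1 := by
      rw [htdef, ← Real.sqrt_mul (by positivity), one_div,
        inv_mul_cancel₀ (ne_of_gt hd0), Real.sqrt_one]
    have hsd : 0 < Real.sqrt d := Real.sqrt_pos.mpr hd0
    calc |Real.sqrt (c j) - t| = |Real.sqrt (c j) - t| * t * Real.sqrt d := by
          rw [mul_assoc, htd, mul_one]
      _ ≤ δ * Real.sqrt d := by exact mul_le_mul_of_nonneg_right key hsd.le
  -- norm bound
  have hnorm : ‖∑ j : ZMod d, ω ^ ((a * j).val) * (Real.sqrt (c j) : ℂ)‖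
      ≤ d * (δ * Real.sqrt d) := by
    rw [hS]
    calc ‖∑ j : ZMod d, ω ^ ((a * j).val) * ((Real.sqrt (c j) - t : ℝ) : ℂ)‖
        ≤ ∑ j : ZMod d, ‖ω ^ ((a * j).val) * ((Real.sqrt (c j) - t : ℝ) : ℂ)‖ :=
          norm_sum_le _ _
      _ ≤ ∑ _j : ZMod d, δ * Real.sqrt d := by
          apply Finset.sum_le_sum
          intro j _
          rw [norm_mul, norm_pow]
          have hω1 : ‖ω‖ = 1 := by
            have : (2 : ℂ) * Real.pi * Complex.I / d = ((2 * Real.pi / d : ℝ) : ℂ) * Complex.I := by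
              push_cast; ring
            rw [hωdef, this]
            exact Complex.norm_exp_ofReal_mul_I _
          rw [hω1, one_pow, one_mul, Complex.norm_real]
          exact hterm j
      _ = d * (δ * Real.sqrt d) := by
          rw [Finset.sum_const, Finset.card_univ, ZMod.card, nsmul_eq_mul]
  have hRHS : (0:ℝ) ≤ d * (δ * Real.sqrt d) := by positivity
  have hsq : ‖∑ j : ZMod d, ω ^ ((a * j).val) * (Real.sqrt (c j) : ℂ)‖ ^ 2
      ≤ (d * (δ * Real.sqrt d)) ^ 2 := by
    exact pow_le_pow_left₀ (norm_nonneg _) hnorm 2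
  have hsd2 : Real.sqrt d ^ 2 = d := Real.sq_sqrt hd0.le
  have h1d : (1:ℝ)/d ≤ 1/d := le_refl _
  calc (1 / (d:ℝ)) * ‖∑ j : ZMod d, ω ^ ((a * j).val) * (Real.sqrt (c j) : ℂ)‖ ^ 2
      ≤ (1 / d) * (d * (δ * Real.sqrt d)) ^ 2 := by
        apply mul_le_mul_of_nonneg_left hsq (by positivity)
    _ = (d:ℝ) ^ 2 * δ ^ 2 := by
        field_simp
        ring_nf
        nlinarith [hsd2, hd0]
end

section
/- Fix an integer d ≥ 2 and let ω = exp(2πi/d). Let c : ZMod d → ℝ satisfy c_j ≥ 0 for all j, ∑_j c_j = 1, and |c_j − 1/d| ≤ δ for all j, for some δ ≥ 0. Then: (1/d) · | ∑_{j ∈ ZMod d} √(c_j) |² ≥ 1 − (d−1) · d² · δ². -/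
theorem stmt_13 (d : ℕ) [NeZero d] (hd : 2 ≤ d)
    (c : ZMod d → ℝ) (hc : ∀ j, 0 ≤ c j) (hcsum : ∑ j, c j = 1)
    (δ : ℝ) (hδ : 0 ≤ δ) (hcδ : ∀ j : ZMod d, |c j - 1 / d| ≤ δ) :
    (1 / d) * |∑ j : ZMod d, Real.sqrt (c j)| ^ 2
      ≥ 1 - ((d : ℝ) - 1) * (d : ℝ) ^ 2 * δ ^ 2 := by
  have hd0 : (0:ℝ) < d := by positivity
  set r := Real.sqrt d with hr
  have hr0 : 0 < r := Real.sqrt_pos.mpr hd0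
  have hr2 : r ^ 2 = d := Real.sq_sqrt hd0.le
  set s : ZMod d → ℝ := fun j => Real.sqrt (c j) with hs
  have hs0 : ∀ j, 0 ≤ s j := fun j => Real.sqrt_nonneg _
  have hs2 : ∀ j, s j ^ 2 = c j := fun j => Real.sq_sqrt (hc j)
  -- key pointwise bound
  have key : ∀ j, (s j - 1/r) ^ 2 ≤ d * δ ^ 2 := by
    intro j
    have h1 : (s j - 1/r) * (s j + 1/r) = c j - 1 / d := by
      have : (1/r) ^ 2 = 1 / d := by rw [div_pow, hr2]; norm_num
      nlinarith [hs2 j]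
    have h2 : |s j - 1/r| * (s j + 1/r) ≤ δ := by
      have := hcδ j
      calc |s j - 1/r| * (s j + 1/r) = |(s j - 1/r) * (s j + 1/r)| := by
            rw [abs_mul, abs_of_nonneg (by positivity : (0:ℝ) ≤ s j + 1/r)]
        _ = |c j - 1 / d| := by rw [h1]
        _ ≤ δ := this
    have h3 : |s j - 1/r| ≤ r * δ := by
      have hinv : (1:ℝ)/r ≤ s j + 1/r := by linarith [hs0 j]
      have h4 : |s j - 1/r| * (1/r) ≤ δ :=
        le_trans (mul_le_mul_of_nonneg_left hinv (abs_nonneg _)) h2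
      have h5 := mul_le_mul_of_nonneg_right h4 hr0.le
      rw [mul_assoc, one_div_mul_cancel hr0.ne', mul_one] at h5
      linarith
    calc (s j - 1/r) ^ 2 = |s j - 1/r| ^ 2 := (sq_abs _).symm
      _ ≤ (r * δ) ^ 2 := by nlinarith [abs_nonneg (s j - 1/r)]
      _ = d * δ ^ 2 := by rw [mul_pow, hr2]
  set D := ∑ j : ZMod d, (s j - 1/r) ^ 2 with hD
  have hcard : (Fintype.card (ZMod d) : ℝ) = d := by rw [ZMod.card d]
  have hD0 : 0 ≤ D := Finset.sum_nonneg fun j _ => sq_nonneg _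
  have hDle : D ≤ d ^ 2 * δ ^ 2 := by
    calc D ≤ ∑ j : ZMod d, (d:ℝ) * δ ^ 2 :=
          Finset.sum_le_sum fun j _ => key j
      _ = (d:ℝ) * ((d:ℝ) * δ ^ 2) := by
          rw [Finset.sum_const, nsmul_eq_mul, Finset.card_univ, hcard]
      _ = d ^ 2 * δ ^ 2 := by ring
  set S := ∑ j : ZMod d, s j with hSdef
  have hS0 : 0 ≤ S := Finset.sum_nonneg fun j _ => hs0 j
  -- expand D
  have hexp : D = 2 - 2 * (1/r) * S := by
    have : D = (∑ j : ZMod d, s j ^ 2) - 2 * (1/r) * S + (d:ℝ) * (1/r)^2 := by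
      rw [hD, hSdef, Finset.mul_sum, ← Finset.sum_sub_distrib]
      rw [show (d:ℝ) * (1/r)^2 = ∑ _j : ZMod d, (1/r)^2 by
        rw [Finset.sum_const, nsmul_eq_mul, Finset.card_univ, hcard]]
      rw [← Finset.sum_add_distrib]
      congr 1; ext j; ring
    have h2 : ∑ j : ZMod d, s j ^ 2 = 1 := by
      simp only [hs2]; exact hcsum
    have h3 : (d:ℝ) * (1/r)^2 = 1 := by
      rw [div_pow, hr2]; field_simp
    rw [this, h2, h3]; ring
  have habs : |S| = S := abs_of_nonneg hS0
  rw [habs, ge_iff_le]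
  -- from hexp : S = r * (1 - D/2), so S^2/d = (1 - D/2)^2 ≥ 1 - D
  have hSval : S = r * (1 - D / 2) := by
    have := hexp
    field_simp at this ⊢
    nlinarith [hr0]
  have hfinal : (1/(d:ℝ)) * S ^ 2 ≥ 1 - D := by
    rw [hSval]
    have : (r * (1 - D/2))^2 = d * (1 - D/2)^2 := by rw [mul_pow, hr2]
    rw [this]
    have hd' : (1/(d:ℝ)) * ((d:ℝ) * (1 - D/2)^2) = (1 - D/2)^2 := by
      field_simp
    rw [hd']
    nlinarith [sq_nonneg D]
  have hlast : 1 - ((d:ℝ) - 1) * (d:ℝ)^2 * δ^2 ≤ 1 - D := by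
    have : D ≤ ((d:ℝ) - 1) * (d:ℝ)^2 * δ^2 := by
      have hd1 : (1:ℝ) ≤ (d:ℝ) - 1 := by
        have : (2:ℝ) ≤ d := by exact_mod_cast hd
        linarith
      nlinarith [hDle, sq_nonneg ((d:ℝ) * δ)]
    linarith
  linarith [hfinal]
end
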